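/- Let A be an N × N real symmetric matrix with all diagonal entries equal to 1 and all off-diagonal entries of absolute value at most 1/√N. Then rank(A) ≥ N/2. -/

import Mathlib

/-- Alon's rank lemma: an `N × N` real symmetric matrix with unit diagonal and
off-diagonal entries at most `1/√N` in absolute value has rank at least `N/2`. -/
theorem alon_rank_lemma (N : ℕ) (A : Matrix (Fin N) (Fin N) ℝ)
    (hsym : A.IsSymm) (hdiag : ∀ i, A i i = 1)
    (hoff : ∀ i j, i ≠ j → |A i j| ≤ 1 / Real.sqrt N) :
    (N : ℝ) / 2 ≤ (A.rank : ℝ) := by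
  rcases Nat.eq_zero_or_pos N with h0 | hNpos
  · subst h0; simp
  have hN : (0 : ℝ) < N := by exact_mod_cast hNpos
  have hA : A.IsHermitian := by
    rwa [Matrix.IsHermitian, Matrix.conjTranspose_eq_transpose_of_trivial]
  set μ := hA.eigenvalues with hμ
  set U : Matrix (Fin N) (Fin N) ℝ := (hA.eigenvectorUnitary : Matrix (Fin N) (Fin N) ℝ) with hU
  have hUU : star U * U = 1 :=
    (Matrix.mem_unitaryGroup_iff').mp hA.eigenvectorUnitary.2
  have hspec : A = U * Matrix.diagonal μ * star U := by
    simpa using hA.spectral_theorem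
  have key : ∀ B : Matrix (Fin N) (Fin N) ℝ, (U * B * star U).trace = B.trace := by
    intro B
    rw [Matrix.trace_mul_cycle, hUU, Matrix.one_mul]
  -- trace A = ∑ μ
  have htrA : Matrix.trace A = ∑ i, μ i := by
    conv_lhs => rw [hspec]
    rw [key, Matrix.trace_diagonal]
  -- A * A diagonalized
  have hAA : A * A = U * (Matrix.diagonal μ * Matrix.diagonal μ) * star U := by
    conv_lhs => rw [hspec]
    have h2 : U * (Matrix.diagonal μ * Matrix.diagonal μ) * star U
        = U * (Matrix.diagonal μ * (Matrix.diagonal μ * star U)) := by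
      simp only [Matrix.mul_assoc]
    rw [h2]
    simp only [Matrix.mul_assoc]
    rw [← Matrix.mul_assoc (star U) U, hUU, Matrix.one_mul]
  -- trace (A * A) = ∑ μ²
  have htrAA : Matrix.trace (A * A) = ∑ i, μ i ^ 2 := by
    rw [hAA, key, Matrix.diagonal_mul_diagonal, Matrix.trace_diagonal]
    simp [sq]
  -- trace A = N
  have htrA' : Matrix.trace A = N := by
    simp [Matrix.trace, Matrix.diag, hdiag]
  -- bound on trace (A * A)
  have hbound : Matrix.trace (A * A) ≤ 2 * N := by
    have h2 : ∀ i, ∑ j, A i j * A j i ≤ 2 := by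
      intro i
      have hsymm : ∀ j, A j i = A i j := by
        intro j
        conv_lhs => rw [← hsym]
        rfl
      have hle : (N - 1) • ((1 : ℝ) / N) ≤ 1 := by
        rw [nsmul_eq_mul, mul_one_div, div_le_one hN]
        exact_mod_cast Nat.sub_le N 1
      calc ∑ j, A i j * A j i = ∑ j, A i j ^ 2 := by
            simp [sq, hsymm, mul_comm]
        _ = A i i ^ 2 + ∑ j ∈ Finset.univ.erase i, A i j ^ 2 := by
            rw [← Finset.add_sum_erase _ _ (Finset.mem_univ i)]
        _ ≤ 1 + ∑ j ∈ Finset.univ.erase i, (1 / N : ℝ) := by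
            gcongr with j hj
            · simp [hdiag]
            · have hji : j ≠ i := Finset.ne_of_mem_erase hj
              have hab := hoff i j (Ne.symm hji)
              have h1 : |A i j| ^ 2 ≤ (1 / Real.sqrt N) ^ 2 := by
                gcongr
              calc A i j ^ 2 = |A i j| ^ 2 := (sq_abs _).symm
                _ ≤ (1 / Real.sqrt N) ^ 2 := h1
                _ = 1 / N := by
                    rw [div_pow, one_pow, Real.sq_sqrt hN.le]
        _ ≤ 1 + 1 := by
            rw [Finset.sum_const, Finset.card_erase_of_mem (Finset.mem_univ i),
              Finset.card_univ, Fintype.card_fin]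
            linarith
        _ = 2 := by norm_num
    calc Matrix.trace (A * A) = ∑ i, ∑ j, A i j * A j i := by
          simp [Matrix.trace, Matrix.diag, Matrix.mul_apply]
      _ ≤ ∑ _i : Fin N, (2 : ℝ) := Finset.sum_le_sum fun i _ => h2 i
      _ = 2 * N := by simp [mul_comm]
  -- rank = number of nonzero eigenvalues
  set s : Finset (Fin N) := Finset.univ.filter (fun i => μ i ≠ 0) with hs
  have hrank : (A.rank : ℝ) = (s.card : ℝ) := by
    rw [hA.rank_eq_card_non_zero_eigs]
    norm_cast
    simp [hs, Fintype.card_subtype]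
    rfl
  have hsum : ∑ i ∈ s, μ i = ∑ i, μ i := by
    rw [hs]
    exact Finset.sum_filter_ne_zero _
  have hCS : (∑ i ∈ s, μ i) ^ 2 ≤ (s.card : ℝ) * ∑ i ∈ s, μ i ^ 2 :=
    sq_sum_le_card_mul_sum_sq
  have hsq : ∑ i ∈ s, μ i ^ 2 ≤ ∑ i, μ i ^ 2 :=
    Finset.sum_le_sum_of_subset_of_nonneg (Finset.filter_subset _ _)
      (fun i _ _ => sq_nonneg _)
  have keyineq : (N : ℝ) ^ 2 ≤ (A.rank : ℝ) * (2 * N) := by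
    calc (N : ℝ) ^ 2 = (∑ i ∈ s, μ i) ^ 2 := by rw [hsum, ← htrA, htrA']
      _ ≤ (s.card : ℝ) * ∑ i ∈ s, μ i ^ 2 := hCS
      _ ≤ (s.card : ℝ) * ∑ i, μ i ^ 2 :=
          mul_le_mul_of_nonneg_left hsq (Nat.cast_nonneg _)
      _ = (A.rank : ℝ) * Matrix.trace (A * A) := by rw [hrank, htrAA]
      _ ≤ (A.rank : ℝ) * (2 * N) :=
          mul_le_mul_of_nonneg_left hbound (Nat.cast_nonneg _)
  nlinarith [keyineq, hN]
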